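/- A total map f : E → E' of event structures is rigid (preserves causal dependency) if and only if for every configuration x of E and every configuration y of E' with y ⊆ f x, there exists a (necessarily unique) configuration z of E with z ⊆ x and f z = y. -/

import Mathlib

universe u v w

/-- An event structure `(E, ≤, Con)`. -/
structure ES (E : Type u) where
  le : E → E → Prop
  le_refl : ∀ e, le e e
  le_trans : ∀ {a b c}, le a b → le b c → le a c
  le_antisymm : ∀ {a b}, le a b → le b a → a = b
  finitary : ∀ e, Set.Finite {e' | le e' e}
  Con : Set E → Prop
  con_finite : ∀ {X}, Con X → X.Finite
  con_empty : Con ∅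
  con_singleton : ∀ e, Con {e}
  con_mono : ∀ {X Y : Set E}, Y ⊆ X → Con X → Con Y
  con_extend : ∀ {X : Set E} {e e'}, Con X → le e e' → e' ∈ X → Con (insert e X)

namespace ES

variable {E : Type u}

/-- A configuration: consistent and down-closed. -/
def Config (S : ES E) (x : Set E) : Prop :=
  (∀ X : Set E, X ⊆ x → X.Finite → S.Con X) ∧
  ∀ ⦃e e' : E⦄, S.le e' e → e ∈ x → e' ∈ x

/-- The down-closure `[e]` of an event. -/
def downCl (S : ES E) (e : E) : Set E := {e' | S.le e' e}

/-- The concurrency relation. -/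
def Co (S : ES E) (e e' : E) : Prop :=
  S.Con {e, e'} ∧ ¬ S.le e e' ∧ ¬ S.le e' e

end ES

/-- The covering (immediate dependency) relation of an order. -/
def Covers {α : Type u} (le : α → α → Prop) (a b : α) : Prop :=
  a ≠ b ∧ le a b ∧ ∀ c, le a c → le c b → c = a ∨ c = b

/-- An event structure with polarity (`true` = Player `+`, `false` = Opponent `−`). -/
structure Game (E : Type u) extends ES E where
  pol : E → Bool

namespace Game

variable {E : Type u} {E' : Type v}

def Config (G : Game E) : Set E → Prop := G.toES.Config

/-- The dual game: polarities reversed. -/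
def dual (G : Game E) : Game E := { toES := G.toES, pol := fun e => !G.pol e }

/-- The Scott order: `y ⊑ x` iff `y⁻ ⊇ x⁻` and `y⁺ ⊆ x⁺`. -/
def ScottLE (G : Game E) (y x : Set E) : Prop :=
  {e | e ∈ x ∧ G.pol e = false} ⊆ {e | e ∈ y ∧ G.pol e = false} ∧
  {e | e ∈ y ∧ G.pol e = true} ⊆ {e | e ∈ x ∧ G.pol e = true}

/-- `x ⊆⁻ y` : inclusion with only Opponent events intervening. -/
def subNeg (G : Game E) (x y : Set E) : Prop :=
  x ⊆ y ∧ ∀ e ∈ y, e ∉ x → G.pol e = false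

/-- `x ⊆⁺ y` : inclusion with only Player events intervening. -/
def subPos (G : Game E) (x y : Set E) : Prop :=
  x ⊆ y ∧ ∀ e ∈ y, e ∉ x → G.pol e = true

/-- Race-freeness of a game. -/
def RaceFree (G : Game E) : Prop :=
  ∀ x y z, G.Config x → G.Config y → G.Config z →
    G.subNeg x y → G.subPos x z → G.Config (y ∪ z)

end Game

section StableFamilies

variable {E : Type u}

/-- A subset of a family is compatible when some member of the family bounds it. -/
def FamCompatible (F : Set (Set E)) (Z : Set (Set E)) : Prop :=
  ∃ u ∈ F, ∀ z ∈ Z, z ⊆ u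

/-- Stable families: complete, stable, finitary and coincidence-free. -/
def IsStableFamily (F : Set (Set E)) : Prop :=
  F.Nonempty ∧
  (∀ Z ⊆ F, (∀ W ⊆ Z, W.Finite → FamCompatible F W) → ⋃₀ Z ∈ F) ∧
  (∀ Z ⊆ F, Z.Nonempty → FamCompatible F Z → ⋂₀ Z ∈ F) ∧
  (∀ x ∈ F, ∀ e ∈ x, ∃ x₀ ∈ F, x₀.Finite ∧ e ∈ x₀ ∧ x₀ ⊆ x) ∧
  (∀ x ∈ F, ∀ e ∈ x, ∀ e' ∈ x, e ≠ e' →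
    ∃ x₀ ∈ F, x₀ ⊆ x ∧ (e ∈ x₀ ↔ e' ∉ x₀))

/-- The prime configuration `[e]_x` of `e` in `x`. -/
def primeConfig (F : Set (Set E)) (e : E) (x : Set E) : Set E :=
  ⋂₀ {y | y ∈ F ∧ e ∈ y ∧ y ⊆ x}

/-- The primes of a family. -/
def IsPrime (F : Set (Set E)) (p : Set E) : Prop :=
  ∃ e x, x ∈ F ∧ e ∈ x ∧ p = primeConfig F e x

end StableFamilies

section Par

variable {E : Type u} {E' : Type v}

/-- Configurations of a parallel composition `A ∥ B` (componentwise). -/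
def parConfig (A : Game E) (B : Game E') (w : Set (E ⊕ E')) : Prop :=
  A.Config (Sum.inl ⁻¹' w) ∧ B.Config (Sum.inr ⁻¹' w)

/-- Causal dependency of `A ∥ B` (componentwise). -/
def parLE (A : Game E) (B : Game E') : (E ⊕ E') → (E ⊕ E') → Prop :=
  Sum.LiftRel A.le B.le

/-- Polarity of `A⊥ ∥ B`. -/
def parPolL (A : Game E) (B : Game E') : E ⊕ E' → Bool
  | .inl a => !A.pol a
  | .inr b => B.pol b

end Par



lemma downCl_config' {E : Type u} (S : ES E) (e : E) : S.Config (S.downCl e) := by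
  have key : ∀ X : Set E, X.Finite → X ⊆ S.downCl e → S.Con (insert e X) := by
    intro X hfin
    refine Set.Finite.induction_on (motive := fun X _ => X ⊆ S.downCl e → S.Con (insert e X))
      X hfin (fun _ => by simpa using S.con_singleton e) ?_
    intro a X ha hfin ih hsub
    have h1 : S.Con (insert e X) := ih (fun b hb => hsub (Set.mem_insert_of_mem _ hb))
    have h2 : S.le a e := hsub (Set.mem_insert _ _)
    have h3 := S.con_extend h1 h2 (Set.mem_insert _ _)
    refine S.con_mono ?_ h3
    intro b hb
    simp only [Set.mem_insert_iff] at hb ⊢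
    tauto
  constructor
  · intro X hX hfin
    exact S.con_mono (Set.subset_insert _ _) (key X hfin hX)
  · intro a a' hle ha
    exact S.le_trans hle ha

/-- A total map of event structures is rigid iff it induces a discrete
fibration on (finite) configurations; the configuration `z` is necessarily
unique by local injectivity. -/
theorem stmt3 {E : Type u} {E' : Type v} (S : ES E) (T : ES E') (f : E → E')
    (himg : ∀ x, S.Config x → T.Config (f '' x))
    (hinj : ∀ x, S.Config x → ∀ e ∈ x, ∀ e' ∈ x, f e = f e' → e = e') :
    (∀ e e', S.le e' e → T.le (f e') (f e)) ↔
    ∀ x, S.Config x → x.Finite → ∀ y, T.Config y → y.Finite → y ⊆ f '' x →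
      ∃! z, S.Config z ∧ z ⊆ x ∧ f '' z = y := by
  constructor
  · -- rigid → fibration
    intro hrig x hx hxfin y hy hyfin hsub
    refine ⟨x ∩ f ⁻¹' y, ⟨⟨?_, ?_⟩, Set.inter_subset_left, ?_⟩, ?_⟩
    · intro X hX hXfin
      exact hx.1 X (hX.trans Set.inter_subset_left) hXfin
    · intro a a' hle ha
      exact ⟨hx.2 hle ha.1, hy.2 (hrig a a' hle) ha.2⟩
    · ext b
      constructor
      · rintro ⟨a, ⟨hax, hay⟩, rfl⟩
        exact hay
      · intro hb
        obtain ⟨a, hax, rfl⟩ := hsub hb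
        exact ⟨a, ⟨hax, hb⟩, rfl⟩
    · rintro z ⟨hz, hzx, rfl⟩
      ext a
      constructor
      · intro ha
        exact ⟨hzx ha, ⟨a, ha, rfl⟩⟩
      · rintro ⟨hax, hay⟩
        obtain ⟨a', ha', heq⟩ := hay
        rwa [hinj x hx a' (hzx ha') a hax heq] at ha'
  · -- fibration → rigid
    intro H e e' hle
    have hx : S.Config (S.downCl e) := downCl_config' S e
    have hxfin : (S.downCl e).Finite := S.finitary e
    have hfx : T.Config (f '' S.downCl e) := himg _ hx
    set y : Set E' := (f '' S.downCl e) ∩ {b | T.le b (f e)} with hy_def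
    have hy : T.Config y := by
      constructor
      · intro X hX hXfin
        exact hfx.1 X (hX.trans Set.inter_subset_left) hXfin
      · intro b b' hble hb
        exact ⟨hfx.2 hble hb.1, T.le_trans hble hb.2⟩
    have hyfin : y.Finite := (hxfin.image f).subset Set.inter_subset_left
    obtain ⟨z, ⟨hz, hzx, hzy⟩, -⟩ :=
      H _ hx hxfin y hy hyfin Set.inter_subset_left
    have hex : e ∈ S.downCl e := S.le_refl e
    have hfey : f e ∈ y := ⟨⟨e, hex, rfl⟩, T.le_refl (f e)⟩
    rw [← hzy] at hfey
    obtain ⟨a, haz, hae⟩ := hfey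
    have : a = e := hinj _ hx a (hzx haz) e hex hae
    subst this
    have he'z : e' ∈ z := hz.2 hle haz
    have : f e' ∈ y := hzy ▸ ⟨e', he'z, rfl⟩
    exact this.2
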